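/- Let (Θ, 𝓕, ν) be a probability space, l_1, …, l_N ∈ L²(ν), p ∈ ℝ^N a probability vector, and w̃ ∈ ℝ^N. Let u_1, …, u_N ∈ ℝ^J be vectors such that max_{m,n} |∫ l_m l_n dν − u_mᵀ u_n| ≤ ε for some ε ≥ 0. Then ∫_Θ (Σ_n (w̃_n − p_n) l_n(θ))² dν(θ) ≤ ‖Σ_n (w̃_n − p_n) u_n‖² + ‖w̃ − p‖₁² ε, where ‖·‖ is the Euclidean norm on ℝ^J and ‖·‖₁ the ℓ1 norm on ℝ^N. (Inequality (th2b): ‖L − L(w̃)‖²_{ν,2} ≤ ‖u − u(w̃)‖² + ‖w̃ − p‖₁² · max-error.) -/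

import Mathlib

open MeasureTheory
open scoped RealInnerProductSpace

/-- Inequality (th2b): `‖L − L(w̃)‖²_{ν,2} ≤ ‖u − u(w̃)‖² + ‖w̃ − p‖₁² ε` whenever the
projected inner products are uniformly `ε`-accurate. -/
theorem coreset_error_random_projection_bound
    {Θ : Type*} [MeasurableSpace Θ] (ν : Measure Θ) [IsProbabilityMeasure ν]
    (N J : ℕ) (l : Fin N → Θ → ℝ) (hl : ∀ n, MemLp (l n) 2 ν)
    (p : Fin N → ℝ) (hp0 : ∀ n, 0 ≤ p n) (hp1 : ∑ n, p n = 1)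
    (w : Fin N → ℝ)
    (u : Fin N → EuclideanSpace ℝ (Fin J))
    (ε : ℝ) (hε : 0 ≤ ε)
    (hu : ∀ m n, |(∫ θ, l m θ * l n θ ∂ν) - ⟪u m, u n⟫| ≤ ε) :
    ∫ θ, (∑ n, (w n - p n) * l n θ) ^ 2 ∂ν ≤
      ‖∑ n, (w n - p n) • u n‖ ^ 2 + (∑ n, |w n - p n|) ^ 2 * ε := by
  set v : Fin N → ℝ := fun n => w n - p n with hv
  have hInt : ∀ m n : Fin N, Integrable (fun θ => l m θ * l n θ) ν := by
    intro m n
    have h := ((hl n).smul (hl m)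
      (p := 2) (q := 2) (r := 1) (hpqr := ⟨by rw [inv_one, ENNReal.inv_two_add_inv_two]⟩) : MemLp (l m • l n) 1 ν)
    exact memLp_one_iff_integrable.mp h
  have hsq : ∀ θ, (∑ n, v n * l n θ) ^ 2
      = ∑ m, ∑ n, (v m * v n) * (l m θ * l n θ) := by
    intro θ
    rw [sq, Finset.sum_mul_sum]
    refine Finset.sum_congr rfl fun m _ => Finset.sum_congr rfl fun n _ => by ring
  have hL : ∫ θ, (∑ n, v n * l n θ) ^ 2 ∂ν
      = ∑ m, ∑ n, (v m * v n) * ∫ θ, l m θ * l n θ ∂ν := by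
    simp_rw [hsq]
    rw [integral_finset_sum _ (fun m _ =>
      integrable_finset_sum _ (fun n _ => (hInt m n).const_mul _))]
    refine Finset.sum_congr rfl fun m _ => ?_
    rw [integral_finset_sum _ (fun n _ => (hInt m n).const_mul _)]
    exact Finset.sum_congr rfl fun n _ => integral_const_mul _ _
  have hU : ‖∑ n, v n • u n‖ ^ 2 = ∑ m, ∑ n, (v m * v n) * ⟪u m, u n⟫ := by
    rw [← real_inner_self_eq_norm_sq, sum_inner]
    refine Finset.sum_congr rfl fun m _ => ?_
    rw [inner_sum]
    refine Finset.sum_congr rfl fun n _ => ?_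
    rw [real_inner_smul_left, real_inner_smul_right]; ring
  rw [hL, hU]
  have habs : (∑ n, |v n|) ^ 2 = ∑ m, ∑ n, |v m| * |v n| := by
    rw [sq, Finset.sum_mul_sum]
  rw [habs, Finset.sum_mul, ← Finset.sum_add_distrib]
  refine Finset.sum_le_sum fun m _ => ?_
  rw [Finset.sum_mul, ← Finset.sum_add_distrib]
  refine Finset.sum_le_sum fun n _ => ?_
  have h1 : (v m * v n) * ((∫ θ, l m θ * l n θ ∂ν) - ⟪u m, u n⟫)
      ≤ |v m| * |v n| * ε := by
    calc (v m * v n) * ((∫ θ, l m θ * l n θ ∂ν) - ⟪u m, u n⟫)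
        ≤ |(v m * v n) * ((∫ θ, l m θ * l n θ ∂ν) - ⟪u m, u n⟫)| := le_abs_self _
      _ = |v m| * |v n| * |(∫ θ, l m θ * l n θ ∂ν) - ⟪u m, u n⟫| := by
          rw [abs_mul, abs_mul]
      _ ≤ |v m| * |v n| * ε := by
          exact mul_le_mul_of_nonneg_left (hu m n)
            (mul_nonneg (abs_nonneg _) (abs_nonneg _))
  nlinarith [h1]
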